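/- Harris inequality for random walks, with a conditioned variant. Call a set of trajectories A ⊆ ℤ^ℕ increasing if, whenever x = (x_i) and y = (y_i) satisfy x_0 = y_0 and x_{i+1} − x_i ≤ y_{i+1} − y_i for all i, x ∈ A implies y ∈ A. Let S = (S_n)_{n∈ℕ} be a random walk with i.i.d. increments started from a deterministic point S_0 = x_0. Then: (i) for any two increasing events A and B, P(S ∈ A, S ∈ B) ≥ P(S ∈ A)·P(S ∈ B); (ii) if x_0 > 0 and A, B are increasing events depending only on (S_0, …, S_n), then for every N ≥ n with P(min_{k≤N} S_k > 0) > 0, P(S ∈ A, S ∈ B | min_{k≤N} S_k > 0) ≥ P(S ∈ A | min_{k≤N} S_k > 0)·P(S ∈ B); consequently the same inequality holds for the law of S conditioned to stay positive obtained as the N → ∞ limit of these conditionings. -/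

import Mathlib

open MeasureTheory ProbabilityTheory Filter

/-- A set of trajectories `A ⊆ ℤ^ℕ` is increasing (for the canonical partial order on
increments) if whenever `x 0 = y 0` and `x (i+1) - x i ≤ y (i+1) - y i` for all `i`,
`x ∈ A` implies `y ∈ A`. -/
def IncreasingTrajSet (A : Set (ℕ → ℤ)) : Prop :=
  ∀ x y : ℕ → ℤ, x 0 = y 0 → (∀ i, x (i + 1) - x i ≤ y (i + 1) - y i) → x ∈ A → y ∈ A

namespace HarrisAux

/-- rearrangement in ℝ≥0∞ -/
lemma rearrange {a b c d : ENNReal} (hab : a ≤ b) (hcd : c ≤ d) :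
    a * d + b * c ≤ a * c + b * d := by
  obtain ⟨e, rfl⟩ := exists_add_of_le hcd
  calc a * (c + e) + b * c = (a * c + b * c) + a * e := by ring
    _ ≤ (a * c + b * c) + b * e := by
        exact add_le_add_right (mul_le_mul_left hab e) _
    _ = a * c + b * (c + e) := by ring

/-- one-dimensional Harris inequality along a map `T` into a linear order -/
lemma harris1d {α : Type*} [MeasurableSpace α] (μ : Measure α) [IsProbabilityMeasure μ]
    {β : Type*} [LinearOrder β] (T : α → β) (f g : β → ENNReal)
    (hf : Monotone f) (hg : Monotone g) (hf1 : ∀ x, f x ≤ 1) (hg1 : ∀ x, g x ≤ 1)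
    (hfm : Measurable fun a => f (T a)) (hgm : Measurable fun a => g (T a)) :
    (∫⁻ a, f (T a) ∂μ) * (∫⁻ a, g (T a) ∂μ) ≤ ∫⁻ a, f (T a) * g (T a) ∂μ := by
  set If := ∫⁻ a, f (T a) ∂μ with hIf
  set Ig := ∫⁻ a, g (T a) ∂μ with hIg
  set Ifg := ∫⁻ a, f (T a) * g (T a) ∂μ with hIfg
  have hIf1 : If ≤ 1 := by
    calc If ≤ ∫⁻ _, 1 ∂μ := lintegral_mono fun a => hf1 _
      _ = 1 := by simp
  have hIg1 : Ig ≤ 1 := by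
    calc Ig ≤ ∫⁻ _, 1 ∂μ := lintegral_mono fun a => hg1 _
      _ = 1 := by simp
  have key : ∀ a b : α, f (T a) * g (T b) + f (T b) * g (T a) ≤
      f (T a) * g (T a) + f (T b) * g (T b) := by
    intro a b
    rcases le_total (T a) (T b) with h | h
    · exact rearrange (hf h) (hg h)
    · rw [add_comm (f (T a) * g (T b)), add_comm (f (T a) * g (T a))]
      exact rearrange (hf h) (hg h)
  have hA : ∫⁻ a, ∫⁻ b, (f (T a) * g (T b) + f (T b) * g (T a)) ∂μ ∂μ = If * Ig + If * Ig := by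
    have inner : ∀ a : α, ∫⁻ b, (f (T a) * g (T b) + f (T b) * g (T a)) ∂μ
        = f (T a) * Ig + If * g (T a) := by
      intro a
      rw [lintegral_add_left (hgm.const_mul _), lintegral_const_mul' _ _
        (lt_of_le_of_lt (hf1 _) ENNReal.one_lt_top).ne,
        lintegral_mul_const' _ _ (lt_of_le_of_lt (hg1 _) ENNReal.one_lt_top).ne]
    simp_rw [inner]
    rw [lintegral_add_left (hfm.mul_const _), lintegral_mul_const' _ _
      (lt_of_le_of_lt hIg1 ENNReal.one_lt_top).ne,
      lintegral_const_mul' _ _ (lt_of_le_of_lt hIf1 ENNReal.one_lt_top).ne]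
  have hB : ∫⁻ a, ∫⁻ b, (f (T a) * g (T a) + f (T b) * g (T b)) ∂μ ∂μ = Ifg + Ifg := by
    have inner : ∀ a : α, ∫⁻ b, (f (T a) * g (T a) + f (T b) * g (T b)) ∂μ
        = f (T a) * g (T a) + Ifg := by
      intro a
      rw [lintegral_add_right _ (show Measurable fun b => f (T b) * g (T b) from hfm.mul hgm), lintegral_const]
      simp [hIfg]
    simp_rw [inner]
    rw [lintegral_add_right _ measurable_const, lintegral_const]
    simp [hIfg]
  have hle : If * Ig + If * Ig ≤ Ifg + Ifg := by
    rw [← hA, ← hB]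
    exact lintegral_mono fun a => lintegral_mono fun b => key a b
  have h2 : (2 : ENNReal) * (If * Ig) ≤ 2 * Ifg := by
    rw [two_mul, two_mul]; exact hle
  exact (ENNReal.mul_le_mul_iff_right (by norm_num) (by norm_num)).mp h2

lemma comap_pi_le {Ω : Type*} {ι : Type*} [Countable ι] (g : ι → Ω → ℤ)
    (m' : MeasurableSpace Ω)
    (h : ∀ i, MeasurableSpace.comap (g i) inferInstance ≤ m') :
    MeasurableSpace.comap (fun ω (i : ι) => g i ω) inferInstance ≤ m' := by
  letI := m'
  rw [← measurable_iff_comap_le]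
  exact measurable_pi_lambda _ fun i => measurable_iff_comap_le.mpr (h i)

lemma measurable_into_pi_int {Ω' : Type*} (m' : MeasurableSpace Ω') (g : Ω' → (ℕ → ℤ))
    (h : ∀ k z, MeasurableSet[m'] {ω | g ω k = z}) : Measurable[m'] g := by
  letI := m'
  refine measurable_pi_lambda _ fun k => measurable_to_countable' fun z => ?_
  have heq : (fun ω => g ω k) ⁻¹' {z} = {ω | g ω k = z} := by ext ω; simp
  rw [heq]; exact h k z

section Blocks

variable {Ω : Type*} [MeasurableSpace Ω] (ξ : ℕ → Ω → ℤ)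

/-- the sequence of increments as a map into `ℤ^ℕ` -/
def xv (ω : Ω) : ℕ → ℤ := fun i => ξ i ω

/-- the first `n` increments -/
def Xn (n : ℕ) (ω : Ω) : Fin n → ℤ := fun i => ξ i ω

/-- the increments from time `n` on -/
def Yn (n : ℕ) (ω : Ω) : ℕ → ℤ := fun j => ξ (n + j) ω

/-- merging a first block and a tail -/
def merge (n : ℕ) (u : Fin n → ℤ) (y : ℕ → ℤ) : ℕ → ℤ :=
  fun i => if h : i < n then u ⟨i, h⟩ else y (i - n)

lemma merge_lt {n : ℕ} {u : Fin n → ℤ} {y : ℕ → ℤ} {i : ℕ} (h : i < n) :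
    merge n u y i = u ⟨i, h⟩ := dif_pos h

lemma merge_ge {n : ℕ} {u : Fin n → ℤ} {y : ℕ → ℤ} {i : ℕ} (h : ¬ i < n) :
    merge n u y i = y (i - n) := dif_neg h

lemma merge_Xn_Yn (n : ℕ) (ω : Ω) : merge n (Xn ξ n ω) (Yn ξ n ω) = xv ξ ω := by
  funext i
  by_cases h : i < n
  · rw [merge_lt h]; rfl
  · rw [merge_ge h]
    show ξ (n + (i - n)) ω = ξ i ω
    congr 1
    omega

variable {P : Measure Ω} [IsProbabilityMeasure P]

lemma measurable_Xn (hmeas : ∀ i, Measurable (ξ i)) (n : ℕ) : Measurable (Xn ξ n) :=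
  measurable_pi_lambda _ fun i => hmeas i

lemma measurable_Yn (hmeas : ∀ i, Measurable (ξ i)) (n : ℕ) : Measurable (Yn ξ n) :=
  measurable_pi_lambda _ fun j => hmeas (n + j)

lemma indepFun_Xn_Yn (hmeas : ∀ i, Measurable (ξ i))
    (hindep : iIndepFun ξ P) (n : ℕ) :
    IndepFun (Xn ξ n) (Yn ξ n) P := by
  have h_le : ∀ i, MeasurableSpace.comap (ξ i) inferInstance ≤ ‹MeasurableSpace Ω› :=
    fun i => (hmeas i).comap_le
  have hbase := ProbabilityTheory.indep_biSup_compl h_le hindep.iIndep {i | i < n}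
  rw [IndepFun_iff_Indep]
  have hX : MeasurableSpace.comap (Xn ξ n) inferInstance ≤
      ⨆ i ∈ {i | i < n}, MeasurableSpace.comap (ξ i) inferInstance := by
    refine comap_pi_le (fun i : Fin n => ξ i) _ fun i => ?_
    exact le_biSup (fun i => MeasurableSpace.comap (ξ i) inferInstance) i.isLt
  have hY : MeasurableSpace.comap (Yn ξ n) inferInstance ≤
      ⨆ i ∈ {i | i < n}ᶜ, MeasurableSpace.comap (ξ i) inferInstance := by
    refine comap_pi_le (fun j : ℕ => ξ (n + j)) _ fun j => ?_
    have hj : (n + j) ∈ {i | i < n}ᶜ := by simp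
    exact le_biSup (fun i => MeasurableSpace.comap (ξ i) inferInstance) hj
  exact indep_of_indep_of_le_left (indep_of_indep_of_le_right hbase hY) hX

/-- block Fubini: the first `n` increments are independent of the rest -/
lemma block_fubini (hmeas : ∀ i, Measurable (ξ i))
    (hindep : iIndepFun ξ P) (n : ℕ)
    (Φ : (Fin n → ℤ) × (ℕ → ℤ) → ENNReal) (hΦ : Measurable Φ) :
    ∫⁻ ω, Φ (Xn ξ n ω, Yn ξ n ω) ∂P = ∫⁻ ω, ∫⁻ ω', Φ (Xn ξ n ω, Yn ξ n ω') ∂P ∂P := by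
  have hX := measurable_Xn ξ hmeas n
  have hY := measurable_Yn ξ hmeas n
  have hmap : P.map (fun ω => (Xn ξ n ω, Yn ξ n ω)) = (P.map (Xn ξ n)).prod (P.map (Yn ξ n)) :=
    (indepFun_iff_map_prod_eq_prod_map_map hX.aemeasurable hY.aemeasurable).mp
      (indepFun_Xn_Yn ξ hmeas hindep n)
  haveI : IsProbabilityMeasure (P.map (Yn ξ n)) := Measure.isProbabilityMeasure_map hY.aemeasurable
  haveI : IsProbabilityMeasure (P.map (Xn ξ n)) := Measure.isProbabilityMeasure_map hX.aemeasurable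
  calc ∫⁻ ω, Φ (Xn ξ n ω, Yn ξ n ω) ∂P
      = ∫⁻ p, Φ p ∂(P.map (fun ω => (Xn ξ n ω, Yn ξ n ω))) :=
        (lintegral_map hΦ (hX.prodMk hY)).symm
    _ = ∫⁻ p, Φ p ∂((P.map (Xn ξ n)).prod (P.map (Yn ξ n))) := by rw [hmap]
    _ = ∫⁻ u, ∫⁻ y, Φ (u, y) ∂(P.map (Yn ξ n)) ∂(P.map (Xn ξ n)) :=
        lintegral_prod _ hΦ.aemeasurable
    _ = ∫⁻ u, ∫⁻ ω', Φ (u, Yn ξ n ω') ∂P ∂(P.map (Xn ξ n)) := by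
        refine lintegral_congr fun u => ?_
        exact lintegral_map (hΦ.comp measurable_prodMk_left) hY
    _ = ∫⁻ ω, ∫⁻ ω', Φ (Xn ξ n ω, Yn ξ n ω') ∂P ∂P := by
        exact lintegral_map (measurable_of_countable _) hX

/-- determined by the first `n` coordinates -/
def Det (n : ℕ) (F : (ℕ → ℤ) → ENNReal) : Prop :=
  ∀ v w : ℕ → ℤ, (∀ i, i < n → v i = w i) → F v = F w

/-- monotone in the first `n` coordinates (and determined by them) -/
def Mon (n : ℕ) (F : (ℕ → ℤ) → ENNReal) : Prop :=
  ∀ v w : ℕ → ℤ, (∀ i, i < n → v i ≤ w i) → F v ≤ F w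

lemma Mon.det {n : ℕ} {F : (ℕ → ℤ) → ENNReal} (h : Mon n F) : Det n F :=
  fun v w hvw => le_antisymm (h v w fun i hi => (hvw i hi).le) (h w v fun i hi => (hvw i hi).ge)

lemma Det.mul {n : ℕ} {F G : (ℕ → ℤ) → ENNReal} (hF : Det n F) (hG : Det n G) :
    Det n (fun v => F v * G v) :=
  fun v w h => by dsimp only; rw [hF v w h, hG v w h]

/-- extension of a finite block by zeros -/
def extFin (n : ℕ) (u : Fin n → ℤ) : ℕ → ℤ := merge n u 0

lemma measurable_det_comp (hmeas : ∀ i, Measurable (ξ i)) {n : ℕ}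
    {F : (ℕ → ℤ) → ENNReal} (hdet : Det n F) :
    Measurable fun ω => F (xv ξ ω) := by
  have heq : (fun ω => F (xv ξ ω)) = (fun u => F (extFin n u)) ∘ (Xn ξ n) := by
    funext ω
    refine hdet _ _ fun i hi => ?_
    show ξ i ω = extFin n (Xn ξ n ω) i
    simp [extFin, merge, hi, Xn]
  rw [heq]
  exact (measurable_of_countable _).comp (measurable_Xn ξ hmeas n)

lemma step_lemma (hmeas : ∀ i, Measurable (ξ i))
    (hindep : iIndepFun ξ P) (n : ℕ)
    (F : (ℕ → ℤ) → ENNReal) (hdet : Det (n + 1) F) :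
    ∫⁻ ω, F (xv ξ ω) ∂P
      = ∫⁻ ω, ∫⁻ ω', F (Function.update (xv ξ ω) n (ξ n ω')) ∂P ∂P := by
  set Φ : (Fin n → ℤ) × (ℕ → ℤ) → ENNReal := fun p => F (merge n p.1 p.2) with hΦdef
  have hθ : Measurable fun p : (Fin n → ℤ) × (ℕ → ℤ) =>
      (fun i : Fin (n + 1) => merge n p.1 p.2 (i : ℕ)) := by
    refine measurable_pi_lambda _ fun i => ?_
    by_cases h : (i : ℕ) < n
    · simp only [merge, dif_pos h]
      exact (measurable_pi_apply _).comp measurable_fst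
    · simp only [merge, dif_neg h]
      exact (measurable_pi_apply _).comp measurable_snd
  have hΦ : Measurable Φ := by
    have heq : Φ = (fun w : Fin (n + 1) → ℤ => F (extFin (n + 1) w)) ∘
        (fun p : (Fin n → ℤ) × (ℕ → ℤ) => fun i : Fin (n + 1) => merge n p.1 p.2 (i : ℕ)) := by
      funext p
      refine hdet _ _ fun i hi => ?_
      show merge n p.1 p.2 i = extFin (n + 1) _ i
      simp [extFin, merge_lt hi]
    rw [heq]
    exact (measurable_of_countable _).comp hθ
  have hL : ∀ ω, Φ (Xn ξ n ω, Yn ξ n ω) = F (xv ξ ω) := by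
    intro ω; simp only [hΦdef, merge_Xn_Yn]
  have hR : ∀ ω ω', Φ (Xn ξ n ω, Yn ξ n ω') = F (Function.update (xv ξ ω) n (ξ n ω')) := by
    intro ω ω'
    refine hdet _ _ fun i hi => ?_
    by_cases h : i < n
    · rw [merge_lt h, Function.update_of_ne (by omega)]
      rfl
    · have hin : i = n := by omega
      subst hin
      rw [merge_ge h, Function.update_self]
      show ξ (i + (i - i)) ω' = ξ i ω'
      congr 1
      omega
  calc ∫⁻ ω, F (xv ξ ω) ∂P = ∫⁻ ω, Φ (Xn ξ n ω, Yn ξ n ω) ∂P := by simp_rw [hL]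
    _ = ∫⁻ ω, ∫⁻ ω', Φ (Xn ξ n ω, Yn ξ n ω') ∂P ∂P := block_fubini ξ hmeas hindep n Φ hΦ
    _ = ∫⁻ ω, ∫⁻ ω', F (Function.update (xv ξ ω) n (ξ n ω')) ∂P ∂P := by simp_rw [hR]

/-- finite-dimensional Harris inequality -/
lemma fd_harris (hmeas : ∀ i, Measurable (ξ i))
    (hindep : iIndepFun ξ P) :
    ∀ (n : ℕ) (F G : (ℕ → ℤ) → ENNReal), Mon n F → Mon n G →
    (∀ v, F v ≤ 1) → (∀ v, G v ≤ 1) →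
    (∫⁻ ω, F (xv ξ ω) ∂P) * (∫⁻ ω, G (xv ξ ω) ∂P) ≤ ∫⁻ ω, F (xv ξ ω) * G (xv ξ ω) ∂P := by
  intro n
  induction n with
  | zero =>
    intro F G hF hG _ _
    have hcF : ∀ v, F v = F (fun _ => 0) :=
      fun v => le_antisymm (hF v _ fun i hi => absurd hi (Nat.not_lt_zero i))
        (hF _ v fun i hi => absurd hi (Nat.not_lt_zero i))
    have hcG : ∀ v, G v = G (fun _ => 0) :=
      fun v => le_antisymm (hG v _ fun i hi => absurd hi (Nat.not_lt_zero i))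
        (hG _ v fun i hi => absurd hi (Nat.not_lt_zero i))
    simp_rw [hcF, hcG]
    rw [lintegral_const, lintegral_const, lintegral_const]
    simp
  | succ n ih =>
    intro F G hF hG hF1 hG1
    set Fb : (ℕ → ℤ) → ENNReal := fun v => ∫⁻ ω', F (Function.update v n (ξ n ω')) ∂P with hFb
    set Gb : (ℕ → ℤ) → ENNReal := fun v => ∫⁻ ω', G (Function.update v n (ξ n ω')) ∂P with hGb
    set FGb : (ℕ → ℤ) → ENNReal :=
      fun v => ∫⁻ ω', F (Function.update v n (ξ n ω')) * G (Function.update v n (ξ n ω')) ∂P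
      with hFGb
    have hupd_le : ∀ (v w : ℕ → ℤ) (t : ℤ), (∀ i, i < n → v i ≤ w i) →
        ∀ i, i < n + 1 → Function.update v n t i ≤ Function.update w n t i := by
      intro v w t h i hi
      by_cases hin : i = n
      · subst hin; simp [Function.update_self]
      · rw [Function.update_of_ne hin, Function.update_of_ne hin]
        exact h i (by omega)
    have hFbMon : Mon n Fb := fun v w h =>
      lintegral_mono fun ω' => hF _ _ (hupd_le v w _ h)
    have hGbMon : Mon n Gb := fun v w h =>
      lintegral_mono fun ω' => hG _ _ (hupd_le v w _ h)
    have hFb1 : ∀ v, Fb v ≤ 1 := fun v =>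
      le_trans (lintegral_mono fun ω' => hF1 _) (by simp)
    have hGb1 : ∀ v, Gb v ≤ 1 := fun v =>
      le_trans (lintegral_mono fun ω' => hG1 _) (by simp)
    have hstepF := step_lemma ξ hmeas hindep n F hF.det
    have hstepG := step_lemma ξ hmeas hindep n G hG.det
    have hstepFG := step_lemma ξ hmeas hindep n (fun v => F v * G v) (hF.det.mul hG.det)
    have hkey : ∀ v, Fb v * Gb v ≤ FGb v := by
      intro v
      have hmono : ∀ t t' : ℤ, t ≤ t' → ∀ i, i < n + 1 →
          Function.update v n t i ≤ Function.update v n t' i := by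
        intro t t' htt i hi
        by_cases hin : i = n
        · subst hin; simpa [Function.update_self] using htt
        · rw [Function.update_of_ne hin, Function.update_of_ne hin]
      exact harris1d P (ξ n) (fun t => F (Function.update v n t))
        (fun t => G (Function.update v n t))
        (fun t t' htt => hF _ _ (hmono t t' htt))
        (fun t t' htt => hG _ _ (hmono t t' htt))
        (fun t => hF1 _) (fun t => hG1 _)
        ((measurable_of_countable (fun t : ℤ => F (Function.update v n t))).comp (hmeas n))
        ((measurable_of_countable (fun t : ℤ => G (Function.update v n t))).comp (hmeas n))
    calc (∫⁻ ω, F (xv ξ ω) ∂P) * (∫⁻ ω, G (xv ξ ω) ∂P)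
        = (∫⁻ ω, Fb (xv ξ ω) ∂P) * (∫⁻ ω, Gb (xv ξ ω) ∂P) := by rw [hstepF, hstepG]
      _ ≤ ∫⁻ ω, Fb (xv ξ ω) * Gb (xv ξ ω) ∂P := ih Fb Gb hFbMon hGbMon hFb1 hGb1
      _ ≤ ∫⁻ ω, FGb (xv ξ ω) ∂P := lintegral_mono fun ω => hkey (xv ξ ω)
      _ = ∫⁻ ω, F (xv ξ ω) * G (xv ξ ω) ∂P := hstepFG.symm

/-- a set of increment-sequences determined by the first `n` coordinates -/
def DetS (n : ℕ) (T : Set (ℕ → ℤ)) : Prop :=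
  ∀ v w : ℕ → ℤ, (∀ i, i < n → v i = w i) → (v ∈ T ↔ w ∈ T)

lemma DetS.mono {n m : ℕ} {T : Set (ℕ → ℤ)} (h : DetS n T) (hnm : n ≤ m) : DetS m T :=
  fun v w hvw => h v w fun i hi => hvw i (lt_of_lt_of_le hi hnm)

lemma DetS.compl {n : ℕ} {T : Set (ℕ → ℤ)} (h : DetS n T) : DetS n Tᶜ :=
  fun v w hvw => not_congr (h v w hvw)

lemma DetS.union {n : ℕ} {T T' : Set (ℕ → ℤ)} (h : DetS n T) (h' : DetS n T') :
    DetS n (T ∪ T') :=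
  fun v w hvw => or_congr (h v w hvw) (h' v w hvw)

/-- the trajectory built from a starting point and increments -/
def trajOf (x₀ : ℤ) (v : ℕ → ℤ) : ℕ → ℤ := fun k => x₀ + ∑ i ∈ Finset.range k, v i

/-- the trajectory whose first `n` increments are given by `v` and the others by `ξ` -/
def trajv (ξ : ℕ → Ω → ℤ) (x₀ : ℤ) (n : ℕ) (v : ℕ → ℤ) (ω : Ω) : ℕ → ℤ :=
  fun k => x₀ + ∑ i ∈ Finset.range k, (if i < n then v i else ξ i ω)

/-- conditional probability of the trajectory event given the first `n` increments -/
def hFun (P : Measure Ω) (ξ : ℕ → Ω → ℤ) (x₀ : ℤ) (A : Set (ℕ → ℤ)) (n : ℕ)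
    (v : ℕ → ℤ) : ENNReal :=
  P {ω' | trajv ξ x₀ n v ω' ∈ A}

variable (x₀ : ℤ)

lemma trajv_zero (n : ℕ) (v : ℕ → ℤ) (ω : Ω) : trajv ξ x₀ n v ω 0 = x₀ := by
  simp [trajv]

lemma trajv_incr (n : ℕ) (v : ℕ → ℤ) (ω : Ω) (k : ℕ) :
    trajv ξ x₀ n v ω (k + 1) - trajv ξ x₀ n v ω k = (if k < n then v k else ξ k ω) := by
  simp [trajv, Finset.sum_range_succ]

lemma measurable_trajv (hmeas : ∀ i, Measurable (ξ i)) (n : ℕ) (v : ℕ → ℤ) :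
    Measurable (trajv ξ x₀ n v) := by
  refine measurable_pi_lambda _ fun k => ?_
  refine Measurable.const_add ?_ x₀
  refine Finset.measurable_sum _ fun i _ => ?_
  by_cases h : i < n
  · simp only [if_pos h]; exact measurable_const
  · simp only [if_neg h]; exact hmeas i

lemma hFun_det (A : Set (ℕ → ℤ)) (n : ℕ) : Det n (hFun P ξ x₀ A n) := by
  intro v w hvw
  unfold hFun
  congr 1
  ext ω'
  have : trajv ξ x₀ n v ω' = trajv ξ x₀ n w ω' := by
    funext k
    unfold trajv
    congr 1
    refine Finset.sum_congr rfl fun i _ => ?_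
    by_cases h : i < n
    · simp [h, hvw i h]
    · simp [h]
  simp [Set.mem_setOf_eq, this]

lemma hFun_mon {A : Set (ℕ → ℤ)} (hA : IncreasingTrajSet A) (n : ℕ) :
    Mon n (hFun P ξ x₀ A n) := by
  intro v w hvw
  refine measure_mono fun ω' hω' => ?_
  refine hA (trajv ξ x₀ n v ω') (trajv ξ x₀ n w ω') ?_ ?_ hω'
  · rw [trajv_zero, trajv_zero]
  · intro i
    rw [trajv_incr, trajv_incr]
    by_cases h : i < n
    · simp only [if_pos h]; exact hvw i h
    · simp only [if_neg h]; exact le_refl _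

lemma hFun_le_one (A : Set (ℕ → ℤ)) (n : ℕ) (v : ℕ → ℤ) : hFun P ξ x₀ A n v ≤ 1 :=
  prob_le_one

lemma measurable_merge_coord (n : ℕ) (i : ℕ) :
    Measurable fun p : (Fin n → ℤ) × (ℕ → ℤ) => merge n p.1 p.2 i := by
  by_cases h : i < n
  · simp only [merge, dif_pos h]
    exact (measurable_pi_apply _).comp measurable_fst
  · simp only [merge, dif_neg h]
    exact (measurable_pi_apply _).comp measurable_snd

lemma measurable_cylinder (hmeas : ∀ i, Measurable (ξ i)) {n : ℕ} {T : Set (ℕ → ℤ)}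
    (hT : DetS n T) : MeasurableSet {ω | xv ξ ω ∈ T} := by
  have : {ω | xv ξ ω ∈ T} = (Xn ξ n) ⁻¹' {u | extFin n u ∈ T} := by
    ext ω
    simp only [Set.mem_setOf_eq, Set.mem_preimage]
    exact hT _ _ fun i hi => by simp [extFin, merge, hi, Xn, xv]
  rw [this]
  exact (measurable_Xn ξ hmeas n) ((Set.to_countable _).measurableSet)

lemma measurable_trajOf_xv (hmeas : ∀ i, Measurable (ξ i)) :
    Measurable fun ω => trajOf x₀ (xv ξ ω) := by
  refine measurable_pi_lambda _ fun k => ?_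
  refine Measurable.const_add ?_ x₀
  exact Finset.measurable_sum _ fun i _ => hmeas i

/-- the key cylinder identity -/
lemma cyl_eq (hmeas : ∀ i, Measurable (ξ i))
    (hindep : iIndepFun ξ P)
    (A : Set (ℕ → ℤ)) (hA : MeasurableSet A) (n : ℕ)
    (T : Set (ℕ → ℤ)) (hT : DetS n T) :
    P ({ω | trajOf x₀ (xv ξ ω) ∈ A} ∩ {ω | xv ξ ω ∈ T})
      = ∫⁻ ω, ({ω : Ω | xv ξ ω ∈ T}).indicator (fun ω => hFun P ξ x₀ A n (xv ξ ω)) ω ∂P := by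
  classical
  set Φ : (Fin n → ℤ) × (ℕ → ℤ) → ENNReal := fun p =>
    T.indicator 1 (merge n p.1 p.2) * A.indicator 1 (trajOf x₀ (merge n p.1 p.2)) with hΦdef
  have hmergeext : ∀ (p : (Fin n → ℤ) × (ℕ → ℤ)) (i : ℕ), i < n →
      merge n p.1 p.2 i = extFin n p.1 i := by
    intro p i hi
    simp [extFin, merge, hi]
  have hΦmeas : Measurable Φ := by
    refine Measurable.mul ?_ ?_
    · have heq : (fun p : (Fin n → ℤ) × (ℕ → ℤ) => T.indicator (1 : (ℕ → ℤ) → ENNReal)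
          (merge n p.1 p.2)) = (fun u => T.indicator 1 (extFin n u)) ∘ Prod.fst := by
        funext p
        by_cases hmem : merge n p.1 p.2 ∈ T
        · have : extFin n p.1 ∈ T := (hT _ _ (hmergeext p)).mp hmem
          simp [hmem, this]
        · have : extFin n p.1 ∉ T := fun hc => hmem ((hT _ _ (hmergeext p)).mpr hc)
          simp [hmem, this]
      rw [heq]
      exact (measurable_of_countable _).comp measurable_fst
    · refine (measurable_const.indicator hA).comp ?_
      refine measurable_pi_lambda _ fun k => ?_
      refine Measurable.const_add ?_ x₀
      exact Finset.measurable_sum _ fun i _ => measurable_merge_coord n i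
  have hL : (fun ω => Φ (Xn ξ n ω, Yn ξ n ω))
      = ({ω | trajOf x₀ (xv ξ ω) ∈ A} ∩ {ω | xv ξ ω ∈ T}).indicator 1 := by
    funext ω
    simp only [hΦdef, merge_Xn_Yn]
    by_cases h1 : xv ξ ω ∈ T <;> by_cases h2 : trajOf x₀ (xv ξ ω) ∈ A <;>
      simp [h1, h2, Set.indicator_apply, Set.mem_inter_iff]
  have hmergeR : ∀ ω ω', merge n (Xn ξ n ω) (Yn ξ n ω') = fun i =>
      if i < n then ξ i ω else ξ i ω' := by
    intro ω ω'
    funext i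
    by_cases h : i < n
    · simp [merge, h, Xn]
    · simp only [merge, dif_neg h, if_neg h]
      show ξ (n + (i - n)) ω' = ξ i ω'
      congr 1
      omega
  have hR : ∀ ω ω', Φ (Xn ξ n ω, Yn ξ n ω')
      = T.indicator 1 (xv ξ ω) * A.indicator 1 (trajv ξ x₀ n (xv ξ ω) ω') := by
    intro ω ω'
    simp only [hΦdef]
    congr 1
    · by_cases hmem : merge n (Xn ξ n ω) (Yn ξ n ω') ∈ T
      · have : xv ξ ω ∈ T := by
          refine (hT _ _ fun i hi => ?_).mp hmem
          rw [hmergeR]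
          simp [hi, xv]
        simp [hmem, this]
      · have : xv ξ ω ∉ T := fun hc => hmem <| by
          refine (hT _ _ fun i hi => ?_).mpr hc
          rw [hmergeR]
          simp [hi, xv]
        simp [hmem, this]
    · congr 1
      rw [hmergeR]
      funext k
      unfold trajOf trajv
      rfl
  have main := block_fubini ξ hmeas hindep n Φ hΦmeas
  rw [show (∫⁻ ω, Φ (Xn ξ n ω, Yn ξ n ω) ∂P)
      = P ({ω | trajOf x₀ (xv ξ ω) ∈ A} ∩ {ω | xv ξ ω ∈ T}) from ?_] at main
  · rw [main]
    refine lintegral_congr fun ω => ?_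
    have hinner : ∫⁻ ω', Φ (Xn ξ n ω, Yn ξ n ω') ∂P
        = T.indicator 1 (xv ξ ω) * hFun P ξ x₀ A n (xv ξ ω) := by
      simp_rw [hR ω]
      rw [lintegral_const_mul' _ _ (by
        by_cases h : xv ξ ω ∈ T <;> simp [h] : T.indicator (1:(ℕ→ℤ)→ENNReal) (xv ξ ω) ≠ ⊤)]
      congr 1
      have : (fun ω' => A.indicator (1:(ℕ→ℤ)→ENNReal) (trajv ξ x₀ n (xv ξ ω) ω'))
          = ({ω' : Ω | trajv ξ x₀ n (xv ξ ω) ω' ∈ A}).indicator 1 := by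
        funext ω'
        by_cases h : trajv ξ x₀ n (xv ξ ω) ω' ∈ A <;> simp [h, Set.indicator_apply]
      rw [this, lintegral_indicator_one]
      · rfl
      · exact (measurable_trajv ξ x₀ hmeas n (xv ξ ω)) hA
    rw [hinner]
    by_cases h : xv ξ ω ∈ T <;> simp [h, Set.indicator_apply]
  · rw [show (fun ω => Φ (Xn ξ n ω, Yn ξ n ω)) = _ from hL, lintegral_indicator_one]
    exact ((measurable_trajOf_xv ξ x₀ hmeas) hA).inter (measurable_cylinder ξ hmeas hT)

lemma traj_eq_lintegral (hmeas : ∀ i, Measurable (ξ i))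
    (hindep : iIndepFun ξ P)
    (A : Set (ℕ → ℤ)) (hA : MeasurableSet A) (n : ℕ) :
    P {ω | trajOf x₀ (xv ξ ω) ∈ A} = ∫⁻ ω, hFun P ξ x₀ A n (xv ξ ω) ∂P := by
  have := cyl_eq ξ x₀ hmeas hindep A hA n Set.univ (fun v w _ => Iff.rfl)
  simpa using this

/-- cylinder sets in `Ω` -/
def IsCyl (C : Set Ω) : Prop := ∃ n T, DetS n T ∧ C = {ω | xv ξ ω ∈ T}

/-- approximability by cylinder sets -/
def Approx (P : Measure Ω) (ξ : ℕ → Ω → ℤ) (E : Set Ω) : Prop :=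
  ∀ ε : ENNReal, 0 < ε → ∃ C, IsCyl ξ C ∧ P (symmDiff E C) ≤ ε

lemma IsCyl.measurableSet (hmeas : ∀ i, Measurable (ξ i)) {C : Set Ω} (h : IsCyl ξ C) :
    MeasurableSet C := by
  obtain ⟨n, T, hT, rfl⟩ := h
  exact measurable_cylinder ξ hmeas hT

lemma isCyl_empty : IsCyl ξ (∅ : Set Ω) :=
  ⟨0, ∅, fun _ _ _ => Iff.rfl, by ext ω; simp⟩

lemma IsCyl.compl {C : Set Ω} (h : IsCyl ξ C) : IsCyl ξ Cᶜ := by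
  obtain ⟨n, T, hT, rfl⟩ := h
  exact ⟨n, Tᶜ, hT.compl, by ext ω; simp⟩

lemma IsCyl.union {C D : Set Ω} (hC : IsCyl ξ C) (hD : IsCyl ξ D) : IsCyl ξ (C ∪ D) := by
  obtain ⟨n, T, hT, rfl⟩ := hC
  obtain ⟨m, T', hT', rfl⟩ := hD
  exact ⟨max n m, T ∪ T', (hT.mono (le_max_left n m)).union (hT'.mono (le_max_right n m)),
    by ext ω; simp⟩

lemma isCyl_self_approx {C : Set Ω} (h : IsCyl ξ C) : Approx P ξ C := by
  intro ε hε
  exact ⟨C, h, by simp [symmDiff_self]⟩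

lemma Approx.union {E F : Set Ω} (hE : Approx P ξ E) (hF : Approx P ξ F) :
    Approx P ξ (E ∪ F) := by
  intro ε hε
  obtain ⟨C, hC, hCle⟩ := hE (ε / 2) (ENNReal.half_pos hε.ne')
  obtain ⟨D, hD, hDle⟩ := hF (ε / 2) (ENNReal.half_pos hε.ne')
  refine ⟨C ∪ D, IsCyl.union ξ hC hD, ?_⟩
  have hsub : symmDiff (E ∪ F) (C ∪ D) ⊆ symmDiff E C ∪ symmDiff F D := by
    intro x hx
    simp only [Set.mem_symmDiff, Set.mem_union] at *
    tauto
  calc P (symmDiff (E ∪ F) (C ∪ D)) ≤ P (symmDiff E C ∪ symmDiff F D) := measure_mono hsub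
    _ ≤ P (symmDiff E C) + P (symmDiff F D) := measure_union_le _ _
    _ ≤ ε / 2 + ε / 2 := add_le_add hCle hDle
    _ = ε := ENNReal.add_halves ε

lemma Approx.compl {E : Set Ω} (hE : Approx P ξ E) : Approx P ξ Eᶜ := by
  intro ε hε
  obtain ⟨C, hC, hCle⟩ := hE ε hε
  exact ⟨Cᶜ, hC.compl, by rwa [compl_symmDiff_compl]⟩

lemma accumulate_good {f : ℕ → Set Ω}
    (hf : ∀ i, MeasurableSet (f i) ∧ Approx P ξ (f i)) (k : ℕ) :
    MeasurableSet (Set.accumulate f k) ∧ Approx P ξ (Set.accumulate f k) := by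
  induction k with
  | zero =>
    have : Set.accumulate f 0 = f 0 := by
      ext x; simp [Set.mem_accumulate, Nat.le_zero]
    rw [this]; exact hf 0
  | succ k ih =>
    have : Set.accumulate f (k + 1) = Set.accumulate f k ∪ f (k + 1) := by
      ext x
      simp only [Set.mem_accumulate, Set.mem_union, Nat.le_succ_iff]
      constructor
      · rintro ⟨y, hy | hy, hmem⟩
        · exact Or.inl ⟨y, hy, hmem⟩
        · subst hy; exact Or.inr hmem
      · rintro (⟨y, hy, hmem⟩ | hmem)
        · exact ⟨y, Or.inl hy, hmem⟩
        · exact ⟨k + 1, Or.inr rfl, hmem⟩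
    rw [this]
    exact ⟨ih.1.union (hf (k + 1)).1, Approx.union ξ ih.2 (hf (k + 1)).2⟩

lemma good_iUnion [IsProbabilityMeasure P] {f : ℕ → Set Ω}
    (hf : ∀ i, MeasurableSet (f i) ∧ Approx P ξ (f i)) :
    MeasurableSet (⋃ i, f i) ∧ Approx P ξ (⋃ i, f i) := by
  refine ⟨MeasurableSet.iUnion fun i => (hf i).1, ?_⟩
  intro ε hε
  have hε2 : (0 : ENNReal) < ε / 2 := ENNReal.half_pos hε.ne'
  set E := ⋃ i, f i with hE
  -- find k such that P (E \ Accumulate f k) ≤ ε / 2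
  have htend : Tendsto (fun k => P (Set.accumulate f k)) atTop (nhds (P E)) := by
    have := tendsto_measure_iUnion_atTop (μ := P) (s := Set.accumulate f)
      Set.monotone_accumulate
    rwa [Set.iUnion_accumulate] at this
  have hex : ∃ k, P E ≤ P (Set.accumulate f k) + ε / 2 := by
    by_cases hle : P E ≤ ε / 2
    · exact ⟨0, hle.trans (le_add_self)⟩
    · push_neg at hle
      have hPE0 : P E ≠ 0 := by
        intro h
        rw [h] at hle
        exact absurd hle (by simp)
      have hlt : P E - ε / 2 < P E :=
        ENNReal.sub_lt_self (measure_ne_top P E) hPE0 hε2.ne'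
      obtain ⟨k, hk⟩ := (htend.eventually (eventually_gt_nhds hlt)).exists
      exact ⟨k, tsub_le_iff_right.mp hk.le⟩
  obtain ⟨k, hk⟩ := hex
  have hacc := accumulate_good ξ hf k
  obtain ⟨C, hC, hCle⟩ := hacc.2 (ε / 2) hε2
  refine ⟨C, hC, ?_⟩
  have h1 : P (symmDiff E (Set.accumulate f k)) ≤ ε / 2 := by
    have hsub : Set.accumulate f k ⊆ E := Set.accumulate_subset_iUnion k
    rw [symmDiff_comm, symmDiff_of_le hsub]
    have : P (E \ Set.accumulate f k) = P E - P (Set.accumulate f k) :=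
      measure_diff hsub hacc.1.nullMeasurableSet (measure_ne_top P _)
    rw [this]
    exact tsub_le_iff_right.mpr (by rwa [add_comm] at hk)
  calc P (symmDiff E C) ≤ P (symmDiff E (Set.accumulate f k)) +
        P (symmDiff (Set.accumulate f k) C) := measure_symmDiff_le _ _ _
    _ ≤ ε / 2 + ε / 2 := add_le_add h1 hCle
    _ = ε := ENNReal.add_halves ε

/-- the σ-algebra of cylinder-approximable measurable sets -/
def goodSigma (P : Measure Ω) (ξ : ℕ → Ω → ℤ) [IsProbabilityMeasure P] :
    MeasurableSpace Ω :=
  { MeasurableSet' := fun E => MeasurableSet E ∧ Approx P ξ E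
    measurableSet_empty := ⟨MeasurableSet.empty, isCyl_self_approx ξ (isCyl_empty ξ)⟩
    measurableSet_compl := fun E hE => ⟨hE.1.compl, hE.2.compl⟩
    measurableSet_iUnion := fun f hf => good_iUnion ξ hf }

lemma approx_traj_event [IsProbabilityMeasure P] (hmeas : ∀ i, Measurable (ξ i))
    (A : Set (ℕ → ℤ)) (hA : MeasurableSet A) :
    Approx P ξ {ω | trajOf x₀ (xv ξ ω) ∈ A} := by
  classical
  have hcoord : ∀ (k : ℕ) (z : ℤ),
      MeasurableSet[goodSigma P ξ] {ω | trajOf x₀ (xv ξ ω) k = z} := by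
    intro k z
    have hcyl : IsCyl ξ {ω | trajOf x₀ (xv ξ ω) k = z} := by
      refine ⟨k, {v | trajOf x₀ v k = z}, ?_, rfl⟩
      intro v w hvw
      simp only [Set.mem_setOf_eq, trajOf]
      rw [Finset.sum_congr rfl fun i hi => hvw i (Finset.mem_range.mp hi)]
    have hgood : MeasurableSet {ω | trajOf x₀ (xv ξ ω) k = z} ∧
        Approx P ξ {ω | trajOf x₀ (xv ξ ω) k = z} :=
      ⟨IsCyl.measurableSet ξ hmeas hcyl, isCyl_self_approx ξ hcyl⟩
    exact hgood
  have htraj : Measurable[goodSigma P ξ] fun ω => trajOf x₀ (xv ξ ω) :=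
    measurable_into_pi_int (goodSigma P ξ) _ hcoord
  exact (htraj hA).2

lemma indicator_one_le_one {α : Type*} (s : Set α) (x : α) :
    s.indicator (1 : α → ENNReal) x ≤ 1 := by
  classical
  by_cases h : x ∈ s <;> simp [h]

/-- the main Harris inequality for trajectory events -/
lemma harris_main [IsProbabilityMeasure P] (hmeas : ∀ i, Measurable (ξ i))
    (hindep : iIndepFun ξ P)
    (A B : Set (ℕ → ℤ)) (hA : MeasurableSet A) (hB : MeasurableSet B)
    (hAi : IncreasingTrajSet A) (hBi : IncreasingTrajSet B) :
    P {ω | trajOf x₀ (xv ξ ω) ∈ A} * P {ω | trajOf x₀ (xv ξ ω) ∈ B}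
      ≤ P ({ω | trajOf x₀ (xv ξ ω) ∈ A} ∩ {ω | trajOf x₀ (xv ξ ω) ∈ B}) := by
  classical
  set EA := {ω | trajOf x₀ (xv ξ ω) ∈ A} with hEA
  set EB := {ω | trajOf x₀ (xv ξ ω) ∈ B} with hEB
  refine ENNReal.le_of_forall_pos_le_add fun ε hε _ => ?_
  have hε5 : (0 : ENNReal) < (ε : ENNReal) / 5 :=
    ENNReal.div_pos (by exact_mod_cast hε.ne') (by norm_num)
  obtain ⟨CA, ⟨nA, TA, hTA, hCAeq⟩, hCAle⟩ := approx_traj_event (P := P) ξ x₀ hmeas A hA (ε / 5) hε5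
  obtain ⟨CB, ⟨nB, TB, hTB, hCBeq⟩, hCBle⟩ := approx_traj_event (P := P) ξ x₀ hmeas B hB (ε / 5) hε5
  set n := max nA nB with hn
  have hTA' : DetS n TA := hTA.mono (le_max_left nA nB)
  have hTB' : DetS n TB := hTB.mono (le_max_right nA nB)
  have hCAm : MeasurableSet CA := hCAeq ▸ measurable_cylinder ξ hmeas hTA'
  have hCBm : MeasurableSet CB := hCBeq ▸ measurable_cylinder ξ hmeas hTB'
  set a : Ω → ENNReal := fun ω => hFun P ξ x₀ A n (xv ξ ω) with ha
  set b : Ω → ENNReal := fun ω => hFun P ξ x₀ B n (xv ξ ω) with hb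
  have ham : Measurable a := measurable_det_comp ξ hmeas (hFun_det ξ x₀ A n)
  have hbm : Measurable b := measurable_det_comp ξ hmeas (hFun_det ξ x₀ B n)
  have ha1 : ∀ ω, a ω ≤ 1 := fun ω => hFun_le_one ξ x₀ A n _
  have hb1 : ∀ ω, b ω ≤ 1 := fun ω => hFun_le_one ξ x₀ B n _
  have keyA : P EA = ∫⁻ ω, a ω ∂P := traj_eq_lintegral ξ x₀ hmeas hindep A hA n
  have keyB : P EB = ∫⁻ ω, b ω ∂P := traj_eq_lintegral ξ x₀ hmeas hindep B hB n
  have keyH : (∫⁻ ω, a ω ∂P) * (∫⁻ ω, b ω ∂P) ≤ ∫⁻ ω, a ω * b ω ∂P :=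
    fd_harris ξ hmeas hindep n _ _ (hFun_mon ξ x₀ hAi n) (hFun_mon ξ x₀ hBi n)
      (hFun_le_one ξ x₀ A n) (hFun_le_one ξ x₀ B n)
  -- integral of a outside CA is small
  have houtA : ∫⁻ ω, (CAᶜ).indicator a ω ∂P ≤ (ε : ENNReal) / 5 := by
    have hcompl : {ω | xv ξ ω ∈ TAᶜ} = CAᶜ := by
      rw [hCAeq]; ext ω; simp
    have := cyl_eq ξ x₀ hmeas hindep A hA n TAᶜ hTA'.compl
    rw [hcompl] at this
    rw [← this]
    refine le_trans (measure_mono ?_) hCAle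
    intro ω hω
    rw [Set.mem_symmDiff]
    exact Or.inl ⟨hω.1, hω.2⟩
  have houtB : ∫⁻ ω, (CBᶜ).indicator b ω ∂P ≤ (ε : ENNReal) / 5 := by
    have hcompl : {ω | xv ξ ω ∈ TBᶜ} = CBᶜ := by
      rw [hCBeq]; ext ω; simp
    have := cyl_eq ξ x₀ hmeas hindep B hB n TBᶜ hTB'.compl
    rw [hcompl] at this
    rw [← this]
    refine le_trans (measure_mono ?_) hCBle
    intro ω hω
    rw [Set.mem_symmDiff]
    exact Or.inl ⟨hω.1, hω.2⟩
  set dA : Ω → ENNReal := fun ω => a ω - CA.indicator 1 ω with hdA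
  set dB : Ω → ENNReal := fun ω => b ω - CB.indicator 1 ω with hdB
  have hdAeq : dA = (CAᶜ).indicator a := by
    funext ω
    by_cases h : ω ∈ CA
    · have : a ω - CA.indicator 1 ω = 0 := by
        rw [Set.indicator_of_mem h]
        exact tsub_eq_zero_of_le (ha1 ω)
      simp [hdA, this, Set.indicator_of_notMem (by simpa using h : ω ∉ CAᶜ)]
    · simp [hdA, Set.indicator_of_notMem h, Set.indicator_of_mem (by simpa using h : ω ∈ CAᶜ)]
  have hdBeq : dB = (CBᶜ).indicator b := by
    funext ω
    by_cases h : ω ∈ CB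
    · have : b ω - CB.indicator 1 ω = 0 := by
        rw [Set.indicator_of_mem h]
        exact tsub_eq_zero_of_le (hb1 ω)
      simp [hdB, this, Set.indicator_of_notMem (by simpa using h : ω ∉ CBᶜ)]
    · simp [hdB, Set.indicator_of_notMem h, Set.indicator_of_mem (by simpa using h : ω ∈ CBᶜ)]
  have hdAint : ∫⁻ ω, dA ω ∂P ≤ (ε : ENNReal) / 5 := by rw [hdAeq]; exact houtA
  have hdBint : ∫⁻ ω, dB ω ∂P ≤ (ε : ENNReal) / 5 := by rw [hdBeq]; exact houtB
  have hdAm : Measurable dA := ham.sub (measurable_const.indicator hCAm)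
  have hdBm : Measurable dB := hbm.sub (measurable_const.indicator hCBm)
  have hdA1 : ∀ ω, dA ω ≤ 1 := fun ω => le_trans tsub_le_self (ha1 ω)
  have hdB1 : ∀ ω, dB ω ≤ 1 := fun ω => le_trans tsub_le_self (hb1 ω)
  -- pointwise bound
  have hpt : ∀ ω, a ω * b ω ≤
      (CA ∩ CB).indicator 1 ω + (dB ω + (dA ω + dA ω)) := by
    intro ω
    have h1 : a ω ≤ CA.indicator 1 ω + dA ω := le_add_tsub
    have h2 : b ω ≤ CB.indicator 1 ω + dB ω := le_add_tsub
    calc a ω * b ω ≤ (CA.indicator 1 ω + dA ω) * (CB.indicator 1 ω + dB ω) :=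
          mul_le_mul' h1 h2
      _ = CA.indicator 1 ω * CB.indicator 1 ω + (CA.indicator 1 ω * dB ω +
          (dA ω * CB.indicator 1 ω + dA ω * dB ω)) := by ring
      _ ≤ (CA ∩ CB).indicator 1 ω + (dB ω + (dA ω + dA ω)) := by
          refine add_le_add ?_ (add_le_add ?_ (add_le_add ?_ ?_))
          · by_cases hA' : ω ∈ CA <;> by_cases hB' : ω ∈ CB <;>
              simp [hA', hB', Set.indicator_apply, Set.mem_inter_iff]
          · calc CA.indicator 1 ω * dB ω ≤ 1 * dB ω :=
                mul_le_mul_left (indicator_one_le_one _ _) _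
              _ = dB ω := one_mul _
          · calc dA ω * CB.indicator 1 ω ≤ dA ω * 1 :=
                mul_le_mul_right (indicator_one_le_one _ _) _
              _ = dA ω := mul_one _
          · calc dA ω * dB ω ≤ dA ω * 1 := mul_le_mul_right (hdB1 ω) _
              _ = dA ω := mul_one _
  -- integrate the pointwise bound
  have hint : ∫⁻ ω, a ω * b ω ∂P ≤ P (CA ∩ CB) + ((ε : ENNReal) / 5 +
      ((ε : ENNReal) / 5 + (ε : ENNReal) / 5)) := by
    calc ∫⁻ ω, a ω * b ω ∂P
        ≤ ∫⁻ ω, ((CA ∩ CB).indicator 1 ω + (dB ω + (dA ω + dA ω))) ∂P :=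
          lintegral_mono hpt
      _ = ∫⁻ ω, (CA ∩ CB).indicator 1 ω ∂P + ∫⁻ ω, (dB ω + (dA ω + dA ω)) ∂P := by
          rw [lintegral_add_left (measurable_one.indicator (hCAm.inter hCBm))]
      _ = P (CA ∩ CB) + (∫⁻ ω, dB ω ∂P + (∫⁻ ω, dA ω ∂P + ∫⁻ ω, dA ω ∂P)) := by
          rw [lintegral_indicator_one (hCAm.inter hCBm),
            lintegral_add_left hdBm, lintegral_add_left hdAm]
      _ ≤ P (CA ∩ CB) + ((ε : ENNReal) / 5 + ((ε : ENNReal) / 5 + (ε : ENNReal) / 5)) := by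
          exact add_le_add le_rfl (add_le_add hdBint (add_le_add hdAint hdAint))
  -- compare P (CA ∩ CB) with P (EA ∩ EB)
  have hCC : P (CA ∩ CB) ≤ P (EA ∩ EB) + ((ε : ENNReal) / 5 + (ε : ENNReal) / 5) := by
    have hsub : CA ∩ CB ⊆ (EA ∩ EB) ∪ (symmDiff EA CA ∪ symmDiff EB CB) := by
      intro x hx
      by_cases hxA : x ∈ EA <;> by_cases hxB : x ∈ EB
      · exact Or.inl ⟨hxA, hxB⟩
      · exact Or.inr (Or.inr (Set.mem_symmDiff.mpr (Or.inr ⟨hx.2, hxB⟩)))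
      · exact Or.inr (Or.inl (Set.mem_symmDiff.mpr (Or.inr ⟨hx.1, hxA⟩)))
      · exact Or.inr (Or.inl (Set.mem_symmDiff.mpr (Or.inr ⟨hx.1, hxA⟩)))
    calc P (CA ∩ CB) ≤ P ((EA ∩ EB) ∪ (symmDiff EA CA ∪ symmDiff EB CB)) :=
          measure_mono hsub
      _ ≤ P (EA ∩ EB) + P (symmDiff EA CA ∪ symmDiff EB CB) := measure_union_le _ _
      _ ≤ P (EA ∩ EB) + (P (symmDiff EA CA) + P (symmDiff EB CB)) :=
          add_le_add le_rfl (measure_union_le _ _)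
      _ ≤ P (EA ∩ EB) + ((ε : ENNReal) / 5 + (ε : ENNReal) / 5) :=
          add_le_add le_rfl (add_le_add hCAle hCBle)
  have harith : (ε : ENNReal) / 5 + (ε : ENNReal) / 5 + ((ε : ENNReal) / 5 +
      ((ε : ENNReal) / 5 + (ε : ENNReal) / 5)) = (ε : ENNReal) := by
    have h5 : (ε : ENNReal) / 5 + (ε : ENNReal) / 5 + ((ε : ENNReal) / 5 +
        ((ε : ENNReal) / 5 + (ε : ENNReal) / 5)) = 5 * ((ε : ENNReal) / 5) := by ring
    rw [h5, ENNReal.mul_div_cancel' (by norm_num) (by norm_num)]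
  calc P EA * P EB = (∫⁻ ω, a ω ∂P) * (∫⁻ ω, b ω ∂P) := by rw [keyA, keyB]
    _ ≤ ∫⁻ ω, a ω * b ω ∂P := keyH
    _ ≤ P (CA ∩ CB) + ((ε : ENNReal) / 5 + ((ε : ENNReal) / 5 + (ε : ENNReal) / 5)) := hint
    _ ≤ P (EA ∩ EB) + ((ε : ENNReal) / 5 + (ε : ENNReal) / 5) +
        ((ε : ENNReal) / 5 + ((ε : ENNReal) / 5 + (ε : ENNReal) / 5)) :=
          add_le_add hCC le_rfl
    _ = P (EA ∩ EB) + ((ε : ENNReal) / 5 + (ε : ENNReal) / 5 + ((ε : ENNReal) / 5 +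
        ((ε : ENNReal) / 5 + (ε : ENNReal) / 5))) := by ring
    _ = P (EA ∩ EB) + ε := by rw [harith]

end Blocks

end HarrisAux

open HarrisAux

/-- Harris inequality for a random walk with i.i.d. increments started from a deterministic
point, together with its variant for the walk conditioned to stay positive up to time `N`,
and the consequence for the `N → ∞` limit of these conditionings. -/
theorem harris_inequality_random_walk
    {Ω : Type*} [MeasurableSpace Ω] (P : Measure Ω) [IsProbabilityMeasure P]
    (ξ : ℕ → Ω → ℤ) (hmeas : ∀ i, Measurable (ξ i))
    (hindep : iIndepFun ξ P)
    (hident : ∀ i, P.map (ξ i) = P.map (ξ 0))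
    (x₀ : ℤ) (S : ℕ → Ω → ℤ)
    (hS : ∀ n ω, S n ω = x₀ + ∑ i ∈ Finset.range n, ξ i ω) :
    -- (i) FKG / Harris inequality for increasing events
    (∀ A B : Set (ℕ → ℤ), MeasurableSet A → MeasurableSet B →
      IncreasingTrajSet A → IncreasingTrajSet B →
      P {ω | (fun n => S n ω) ∈ A} * P {ω | (fun n => S n ω) ∈ B} ≤
        P ({ω | (fun n => S n ω) ∈ A} ∩ {ω | (fun n => S n ω) ∈ B})) ∧
    -- (ii) conditioned variant for events depending only on the first n steps
    (0 < x₀ → ∀ (n : ℕ) (A B : Set (ℕ → ℤ)), MeasurableSet A → MeasurableSet B →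
      IncreasingTrajSet A → IncreasingTrajSet B →
      (∀ x y : ℕ → ℤ, (∀ i ≤ n, x i = y i) → (x ∈ A ↔ y ∈ A)) →
      (∀ x y : ℕ → ℤ, (∀ i ≤ n, x i = y i) → (x ∈ B ↔ y ∈ B)) →
      ∀ N : ℕ, n ≤ N → P {ω | ∀ k ≤ N, 0 < S k ω} ≠ 0 →
        (P[|{ω | ∀ k ≤ N, 0 < S k ω}]) {ω | (fun m => S m ω) ∈ A} *
            P {ω | (fun m => S m ω) ∈ B} ≤
          (P[|{ω | ∀ k ≤ N, 0 < S k ω}])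
            ({ω | (fun m => S m ω) ∈ A} ∩ {ω | (fun m => S m ω) ∈ B})) ∧
    -- consequence for the N → ∞ limit of the conditioned laws
    (0 < x₀ → ∀ (n : ℕ) (A B : Set (ℕ → ℤ)), MeasurableSet A → MeasurableSet B →
      IncreasingTrajSet A → IncreasingTrajSet B →
      (∀ x y : ℕ → ℤ, (∀ i ≤ n, x i = y i) → (x ∈ A ↔ y ∈ A)) →
      (∀ x y : ℕ → ℤ, (∀ i ≤ n, x i = y i) → (x ∈ B ↔ y ∈ B)) →
      (∀ N, P {ω | ∀ k ≤ N, 0 < S k ω} ≠ 0) →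
      ∀ LA LAB : ENNReal,
        Tendsto (fun N : ℕ =>
          (P[|{ω | ∀ k ≤ N, 0 < S k ω}]) {ω | (fun m => S m ω) ∈ A}) atTop (nhds LA) →
        Tendsto (fun N : ℕ =>
          (P[|{ω | ∀ k ≤ N, 0 < S k ω}])
            ({ω | (fun m => S m ω) ∈ A} ∩ {ω | (fun m => S m ω) ∈ B})) atTop (nhds LAB) →
        LA * P {ω | (fun m => S m ω) ∈ B} ≤ LAB) := by
  have hfun : ∀ ω, (fun m => S m ω) = trajOf x₀ (xv ξ ω) := by
    intro ω
    funext m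
    rw [hS]
    rfl
  have hset : ∀ A : Set (ℕ → ℤ),
      {ω | (fun m => S m ω) ∈ A} = {ω | trajOf x₀ (xv ξ ω) ∈ A} := by
    intro A
    ext ω
    simp only [Set.mem_setOf_eq, hfun ω]
  -- part (i)
  have part1 : ∀ A B : Set (ℕ → ℤ), MeasurableSet A → MeasurableSet B →
      IncreasingTrajSet A → IncreasingTrajSet B →
      P {ω | (fun n => S n ω) ∈ A} * P {ω | (fun n => S n ω) ∈ B} ≤
        P ({ω | (fun n => S n ω) ∈ A} ∩ {ω | (fun n => S n ω) ∈ B}) := by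
    intro A B hA hB hAi hBi
    rw [hset A, hset B]
    exact harris_main ξ x₀ hmeas hindep A B hA hB hAi hBi
  -- part (ii)
  have part2 : ∀ (A B : Set (ℕ → ℤ)), MeasurableSet A → MeasurableSet B →
      IncreasingTrajSet A → IncreasingTrajSet B →
      ∀ N : ℕ, P {ω | ∀ k ≤ N, 0 < S k ω} ≠ 0 →
        (P[|{ω | ∀ k ≤ N, 0 < S k ω}]) {ω | (fun m => S m ω) ∈ A} *
            P {ω | (fun m => S m ω) ∈ B} ≤
          (P[|{ω | ∀ k ≤ N, 0 < S k ω}])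
            ({ω | (fun m => S m ω) ∈ A} ∩ {ω | (fun m => S m ω) ∈ B}) := by
    intro A B hA hB hAi hBi N _
    set Cset : Set (ℕ → ℤ) := {x | ∀ k ≤ N, 0 < x k} with hCset
    have hCmeas : MeasurableSet Cset := by
      have : Cset = ⋂ k ∈ Set.Iic N, (fun x : ℕ → ℤ => x k) ⁻¹' Set.Ioi 0 := by
        ext x
        simp [hCset, Set.mem_iInter]
      rw [this]
      exact MeasurableSet.biInter (Set.to_countable _)
        fun k _ => (measurable_pi_apply k) measurableSet_Ioi
    have hCinc : IncreasingTrajSet Cset := by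
      intro x y h0 hinc hx k hk
      have hle : ∀ m, x m ≤ y m := by
        intro m
        induction m with
        | zero => exact le_of_eq h0
        | succ m ih => have := hinc m; omega
      exact lt_of_lt_of_le (hx k hk) (hle k)
    have hseq : {ω | ∀ k ≤ N, 0 < S k ω} = {ω | (fun m => S m ω) ∈ Cset} := rfl
    have hs_meas : MeasurableSet {ω | ∀ k ≤ N, 0 < S k ω} := by
      rw [hseq, hset Cset]
      exact (measurable_trajOf_xv ξ x₀ hmeas) hCmeas
    have hACm : MeasurableSet (A ∩ Cset) := hA.inter hCmeas
    have hACi : IncreasingTrajSet (A ∩ Cset) := fun x y h0 hinc hx =>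
      ⟨hAi x y h0 hinc hx.1, hCinc x y h0 hinc hx.2⟩
    have hsplit : {ω | (fun m => S m ω) ∈ A ∩ Cset}
        = {ω | (fun m => S m ω) ∈ A} ∩ {ω | (fun m => S m ω) ∈ Cset} := by
      ext ω; simp [Set.mem_inter_iff]
    have hmain := part1 (A ∩ Cset) B hACm hB hACi hBi
    rw [hsplit] at hmain
    set EA := {ω | (fun m => S m ω) ∈ A} with hEAd
    set EB := {ω | (fun m => S m ω) ∈ B} with hEBd
    set Es := {ω | (fun m => S m ω) ∈ Cset} with hEsd
    rw [ProbabilityTheory.cond_apply hs_meas, ProbabilityTheory.cond_apply hs_meas]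
    rw [hseq]
    have hre1 : Es ∩ EA = EA ∩ Es := Set.inter_comm _ _
    have hre2 : EA ∩ Es ∩ EB = Es ∩ (EA ∩ EB) := by
      ext ω; simp only [Set.mem_inter_iff]; tauto
    rw [hre1, mul_assoc]
    rw [hre2] at hmain
    exact mul_le_mul_right hmain _
  refine ⟨part1, fun _ n A B hA hB hAi hBi _ _ N _ hPs =>
    part2 A B hA hB hAi hBi N hPs, ?_⟩
  -- part (iii)
  intro _ n A B hA hB hAi hBi _ _ hPs LA LAB hTA hTAB
  have hEB_ne_top : P {ω | (fun m => S m ω) ∈ B} ≠ ⊤ := measure_ne_top P _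
  have hTmul : Tendsto (fun N : ℕ =>
      (P[|{ω | ∀ k ≤ N, 0 < S k ω}]) {ω | (fun m => S m ω) ∈ A} *
        P {ω | (fun m => S m ω) ∈ B}) atTop (nhds (LA * P {ω | (fun m => S m ω) ∈ B})) :=
    ENNReal.Tendsto.mul_const hTA (Or.inr hEB_ne_top)
  refine le_of_tendsto_of_tendsto hTmul hTAB ?_
  filter_upwards with N
  exact part2 A B hA hB hAi hBi N (hPs N)
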